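/- Let μ ∈ (0, 1/2) and define φ_1(z) = Σ_{k≥0} (−z²/4)^k / (((μ+1)/2)_k ((μ+2)/2)_k). Assume (as is known for this range) that φ_1 has only real zeros, with positive zeros ζ_{μ,1} < ζ_{μ,2} < ⋯ and Hadamard factorization φ_1(z) = ∏_{n≥1} (1 − z²/ζ_{μ,n}²). Then for every z ∈ ℂ with |z| < ζ_{μ,1}: 1 − (1/(μ − 1/2))·Re( Σ_{n≥1} 2z²/(ζ_{μ,n}² − z²) ) ≥ 1 + (1/(μ − 1/2))·Σ_{n≥1} 2|z|²/(ζ_{μ,n}² + |z|²), with equality when z = i|z|. -/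

import Mathlib

open scoped BigOperators

/-- The Pochhammer symbol `(a)_k = a (a+1) ⋯ (a+k-1)`. -/
noncomputable def poch (a : ℝ) (k : ℕ) : ℝ := ∏ i ∈ Finset.range k, (a + i)

/-- The even entire function `φ₁(z) = Σ_{k≥0} (−z²/4)^k / (((μ+1)/2)_k ((μ+2)/2)_k)`. -/
noncomputable def phi1 (μ : ℝ) (z : ℂ) : ℂ :=
  ∑' k : ℕ, (-z ^ 2 / 4) ^ k / ((poch ((μ + 1) / 2) k : ℂ) * (poch ((μ + 2) / 2) k : ℂ))

lemma re_key (a r : ℝ) (hr : 0 ≤ r) (hra : r < a) (w : ℂ) (hw : ‖w‖ = r) :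
    -(2 * r / (a + r)) ≤ (2 * w / ((a : ℂ) - w)).re := by
  have ha : 0 < a := lt_of_le_of_lt hr hra
  set u := w.re with hu
  set v := w.im with hv
  have hsq : u ^ 2 + v ^ 2 = r ^ 2 := by
    have := Complex.sq_norm w
    rw [Complex.normSq_apply, hw] at this
    nlinarith [this]
  have hur : -r ≤ u := by nlinarith [sq_nonneg v, sq_nonneg (u + r)]
  have hur2 : u ≤ r := by nlinarith [sq_nonneg v, sq_nonneg (u - r)]
  have hN : 0 < (a - u) ^ 2 + v ^ 2 := by nlinarith [sq_nonneg v, mul_pos (show (0:ℝ) < a - u by linarith) (show (0:ℝ) < a - u by linarith)]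
  have hre : (2 * w / ((a : ℂ) - w)).re
      = (2 * u * (a - u) + 2 * v * (-v)) / ((a - u) ^ 2 + v ^ 2) := by
    rw [Complex.div_re]
    simp [Complex.normSq_apply, Complex.sub_re, Complex.sub_im, ← hu, ← hv]
    ring
  rw [hre, neg_le, ← neg_div, div_le_div_iff₀ hN (by linarith)]
  nlinarith [mul_nonneg (mul_nonneg ha.le (by linarith : (0:ℝ) ≤ a - r)) (by linarith : (0:ℝ) ≤ u + r)]

lemma norm_ub (a r : ℝ) (hr : 0 ≤ r) (hra : r < a) (w : ℂ) (hw : ‖w‖ = r) :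
    ‖2 * w / ((a : ℂ) - w)‖ ≤ 2 * r / (a - r) := by
  have hd : a - r ≤ ‖(a : ℂ) - w‖ := by
    have := norm_sub_norm_le ((a : ℂ)) w
    rwa [Complex.norm_real, Real.norm_of_nonneg (by linarith), hw] at this
  have hdpos : 0 < ‖(a : ℂ) - w‖ := lt_of_lt_of_le (by linarith) hd
  rw [norm_div, norm_mul, Complex.norm_ofNat, hw, div_le_div_iff₀ hdpos (by linarith)]
  nlinarith [mul_le_mul_of_nonneg_left hd (by positivity : (0:ℝ) ≤ 2 * r)]

lemma norm_lb (a r : ℝ) (hr : 0 ≤ r) (hra : r < a) (w : ℂ) (hw : ‖w‖ = r) :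
    2 * r / (a + r) ≤ ‖2 * w / ((a : ℂ) - w)‖ := by
  have hd : ‖(a : ℂ) - w‖ ≤ a + r := by
    calc ‖(a : ℂ) - w‖ ≤ ‖(a : ℂ)‖ + ‖w‖ := norm_sub_le _ _
      _ = a + r := by rw [Complex.norm_real, Real.norm_of_nonneg (by linarith), hw]
  have hdge : a - r ≤ ‖(a : ℂ) - w‖ := by
    have := norm_sub_norm_le ((a : ℂ)) w
    rwa [Complex.norm_real, Real.norm_of_nonneg (by linarith), hw] at this
  have hdpos : 0 < ‖(a : ℂ) - w‖ := lt_of_lt_of_le (by linarith) hdge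
  rw [norm_div, norm_mul, Complex.norm_ofNat, hw, div_le_div_iff₀ (by linarith) hdpos]
  nlinarith [mul_le_mul_of_nonneg_left hd (by positivity : (0:ℝ) ≤ 2 * r)]

/-- Let `μ ∈ (0,1/2)` and let `ζ 0 < ζ 1 < ⋯` be the positive zeros
of `φ₁`, with Hadamard factorization `φ₁(z) = ∏ (1 − z²/ζₙ²)`. Then for `|z| < ζ 0`,
`1 − (1/(μ − 1/2)) Re (Σ 2z²/(ζₙ² − z²)) ≥ 1 + (1/(μ − 1/2)) Σ 2|z|²/(ζₙ² + |z|²)`,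
with equality when `z = i |z|`. -/
theorem re_logderiv_bound_phi1 (μ : ℝ) (hμ : μ ∈ Set.Ioo (0 : ℝ) ((1 : ℝ) / 2))
    (ζ : ℕ → ℝ) (hpos : ∀ n, 0 < ζ n) (hmono : StrictMono ζ)
    (hzeros : ∀ x : ℝ, 0 < x → (phi1 μ x = 0 ↔ ∃ n, x = ζ n))
    (hfact : ∀ z : ℂ, phi1 μ z = ∏' n : ℕ, (1 - z ^ 2 / ((ζ n : ℂ)) ^ 2)) :
    (∀ z : ℂ, ‖z‖ < ζ 0 →
      1 - (1 / (μ - 1 / 2)) * (∑' n : ℕ, 2 * z ^ 2 / ((ζ n : ℂ) ^ 2 - z ^ 2)).re ≥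
        1 + (1 / (μ - 1 / 2)) * ∑' n : ℕ, 2 * ‖z‖ ^ 2 / ((ζ n) ^ 2 + ‖z‖ ^ 2)) ∧
    (∀ x : ℝ, 0 ≤ x → x < ζ 0 →
      1 - (1 / (μ - 1 / 2)) *
          (∑' n : ℕ, 2 * (Complex.I * x) ^ 2 / ((ζ n : ℂ) ^ 2 - (Complex.I * x) ^ 2)).re =
        1 + (1 / (μ - 1 / 2)) * ∑' n : ℕ, 2 * x ^ 2 / ((ζ n) ^ 2 + x ^ 2)) := by
  obtain ⟨hμ0, hμ2⟩ := hμ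
  have hc : (1 : ℝ) / (μ - 1 / 2) < 0 := div_neg_of_pos_of_neg one_pos (by linarith)
  set c := (1 : ℝ) / (μ - 1 / 2) with hcdef
  constructor
  · intro z hz
    set r : ℝ := ‖z‖ ^ 2 with hrdef
    have hr0 : 0 ≤ r := sq_nonneg _
    have hra : ∀ n, r < (ζ n) ^ 2 := by
      intro n
      have h1 : ‖z‖ < ζ n := lt_of_lt_of_le hz (hmono.monotone (Nat.zero_le n))
      nlinarith [norm_nonneg z]
    have hw : ‖z ^ 2‖ = r := by rw [norm_pow]
    set f : ℕ → ℂ := fun n => 2 * z ^ 2 / ((ζ n : ℂ) ^ 2 - z ^ 2) with hf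
    set g : ℕ → ℝ := fun n => 2 * r / ((ζ n) ^ 2 + r) with hg
    have hcast : ∀ n : ℕ, ((ζ n : ℂ)) ^ 2 = (((ζ n) ^ 2 : ℝ) : ℂ) := by
      intro n; push_cast; ring
    have hRe : ∀ n, -(g n) ≤ (f n).re := by
      intro n
      have h := re_key ((ζ n) ^ 2) r hr0 (hra n) (z ^ 2) hw
      rw [← hcast n] at h
      exact h
    have hub : ∀ n, ‖f n‖ ≤ 2 * r / ((ζ n) ^ 2 - r) := by
      intro n
      have h := norm_ub ((ζ n) ^ 2) r hr0 (hra n) (z ^ 2) hw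
      rw [← hcast n] at h
      exact h
    have hlb : ∀ n, g n ≤ ‖f n‖ := by
      intro n
      have h := norm_lb ((ζ n) ^ 2) r hr0 (hra n) (z ^ 2) hw
      rw [← hcast n] at h
      exact h
    have hgnn : ∀ n, 0 ≤ g n := by
      intro n
      have := hra n
      simp only [hg]
      positivity
    set C : ℝ := ((ζ 0) ^ 2 + r) / ((ζ 0) ^ 2 - r) with hC
    have hCb : ∀ n, 2 * r / ((ζ n) ^ 2 - r) ≤ C * g n := by
      intro n
      have h0 := hra 0
      have hn := hra n
      have hle : (ζ 0) ^ 2 ≤ (ζ n) ^ 2 := by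
        have h1 : ζ 0 ≤ ζ n := hmono.monotone (Nat.zero_le n)
        nlinarith [(hpos 0).le]
      have hrw : C * g n = ((ζ 0) ^ 2 + r) * (2 * r) / (((ζ 0) ^ 2 - r) * ((ζ n) ^ 2 + r)) := by
        simp only [hC, hg]
        rw [div_mul_div_comm]
      rw [hrw, div_le_div_iff₀ (by linarith) (mul_pos (by linarith) (by nlinarith [hra n, hr0]))]
      nlinarith [mul_le_mul_of_nonneg_left hle hr0]
    by_cases hgs : Summable g
    · have hfs : Summable f := by
        apply Summable.of_norm_bounded (hgs.mul_left C)
        intro n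
        exact le_trans (hub n) (hCb n)
      have hres : Summable fun n => (f n).re := (Complex.hasSum_re hfs.hasSum).summable
      have hT : ∑' n, -(g n) ≤ ∑' n, (f n).re := Summable.tsum_le_tsum hRe hgs.neg hres
      rw [tsum_neg] at hT
      have hTnn : 0 ≤ ∑' n, g n := tsum_nonneg hgnn
      have hre : (∑' n, f n).re = ∑' n, (f n).re := Complex.re_tsum hfs
      rw [ge_iff_le, hre]
      nlinarith [mul_nonpos_of_nonpos_of_nonneg hc.le
        (by linarith : (0:ℝ) ≤ (∑' n, (f n).re) + ∑' n, g n)]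
    · have hfs : ¬ Summable f := by
        intro h
        exact hgs (Summable.of_nonneg_of_le hgnn hlb (summable_norm_iff.mpr h))
      rw [tsum_eq_zero_of_not_summable hfs, tsum_eq_zero_of_not_summable hgs]
      simp
  · intro x hx0 hx1
    set g : ℕ → ℝ := fun n => 2 * x ^ 2 / ((ζ n) ^ 2 + x ^ 2) with hg
    have key : ∀ n : ℕ, 2 * (Complex.I * x) ^ 2 / ((ζ n : ℂ) ^ 2 - (Complex.I * x) ^ 2)
        = ((-(g n) : ℝ) : ℂ) := by
      intro n
      have hζ := hpos n
      have hden : ((ζ n) ^ 2 + x ^ 2 : ℝ) ≠ 0 := by positivity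
      have hI : (Complex.I * x) ^ 2 = -((x : ℂ) ^ 2) := by
        rw [mul_pow, Complex.I_sq]; ring
      rw [hI, sub_neg_eq_add, hg]
      push_cast
      ring
    rw [tsum_congr key, ← Complex.ofReal_tsum, Complex.ofReal_re, tsum_neg]
    ring
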